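/- Let p be a prime, α ∈ 𝔽_p, and let X = X₀ + X₁ and Y = Y₀ + Y₁ be input- and kernel-shaped tensors over 𝔽_p, with reshaped matrices X' (rows indexed by output positions (i,j), columns by (shift, input-channel) triples, X'_{(i,j),(Δi,Δj,k)} = X_{(i+Δi,j+Δj),k}) and Y' (Y'_{(Δi,Δj,k),k'} = Y_{(Δi,Δj),k,k'}). Let ⟨Z'⟩₁ and ⟨αZ'⟩₁ be arbitrary matrices over 𝔽_p and set ⟨Z'⟩₀ = X'∗Y' − ⟨Z'⟩₁ and ⟨αZ'⟩₀ = α·(X'∗Y') − ⟨αZ'⟩₁. Then, after converting back to tensor form, ⟨Z⟩₀ + ⟨Z⟩₁ = Conv(X, Y) and ⟨αZ⟩₀ + ⟨αZ⟩₁ = α·Conv(X, Y); i.e., the protocol π_Ctriple outputs valid authenticated shares of the convolution triple (X, Y, Z = Conv(X,Y)). -/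

import Mathlib

/-- Multi-channel 2D convolution (Eqn. (7)): `Conv(X,Y)_{(i,j),k'} =
Σ_{Δi,Δj ∈ [−l,l]} Σ_{k} X_{(i+Δi, j+Δj),k} · Y_{(Δi,Δj),k,k'}`, where the input
tensor `X` is defined on all of ℤ × ℤ (out-of-range entries are zero). -/
noncomputable def Conv2d {R : Type*} [CommRing R] (l ci co : ℕ)
    (X : ℤ → ℤ → Fin ci → R) (Y : ℤ → ℤ → Fin ci → Fin co → R)
    (i j : ℤ) (k' : Fin co) : R :=
  ∑ Δi ∈ Finset.Icc (-(l : ℤ)) l, ∑ Δj ∈ Finset.Icc (-(l : ℤ)) l, ∑ k,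
    X (i + Δi) (j + Δj) k * Y Δi Δj k k'

/-- Correctness of π_Ctriple: with `X = X₀+X₁`, `Y = Y₀+Y₁`, reshaped matrices
`X'_{(i,j),(Δi,Δj,k)} = X_{(i+Δi,j+Δj),k}`, `Y'_{(Δi,Δj,k),k'} = Y_{(Δi,Δj),k,k'}`,
and shares `⟨Z'⟩₀ = X'∗Y' − ⟨Z'⟩₁`, `⟨αZ'⟩₀ = α·(X'∗Y') − ⟨αZ'⟩₁`, the shares
reconstruct (in tensor form) `Conv(X,Y)` and `α·Conv(X,Y)` respectively. -/
theorem stmt_15 (p : ℕ) [Fact p.Prime] (l ci co : ℕ) (α : ZMod p)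
    (X₀ X₁ X : ℤ → ℤ → Fin ci → ZMod p)
    (Y₀ Y₁ Y : ℤ → ℤ → Fin ci → Fin co → ZMod p)
    (hX : X = X₀ + X₁) (hY : Y = Y₀ + Y₁)
    (X' : Matrix (ℤ × ℤ)
      (↥(Finset.Icc (-(l : ℤ)) l) × ↥(Finset.Icc (-(l : ℤ)) l) × Fin ci) (ZMod p))
    (Y' : Matrix
      (↥(Finset.Icc (-(l : ℤ)) l) × ↥(Finset.Icc (-(l : ℤ)) l) × Fin ci) (Fin co) (ZMod p))
    (hX' : ∀ (ij : ℤ × ℤ) t, X' ij t = X (ij.1 + (t.1 : ℤ)) (ij.2 + (t.2.1 : ℤ)) t.2.2)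
    (hY' : ∀ t k', Y' t k' = Y (t.1 : ℤ) (t.2.1 : ℤ) t.2.2 k')
    (Z'₀ Z'₁ αZ'₀ αZ'₁ : Matrix (ℤ × ℤ) (Fin co) (ZMod p))
    (hZ'₀ : Z'₀ = X' * Y' - Z'₁)
    (hαZ'₀ : αZ'₀ = α • (X' * Y') - αZ'₁) :
    ∀ (i j : ℤ) (k' : Fin co),
      Z'₀ (i, j) k' + Z'₁ (i, j) k' = Conv2d l ci co X Y i j k' ∧
      αZ'₀ (i, j) k' + αZ'₁ (i, j) k' = α * Conv2d l ci co X Y i j k' := by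
  have key : ∀ (i j : ℤ) (k' : Fin co),
      (X' * Y') (i, j) k' = Conv2d l ci co X Y i j k' := by
    intro i j k'
    simp only [Matrix.mul_apply, Conv2d, Fintype.sum_prod_type]
    rw [← Finset.sum_coe_sort (Finset.Icc (-(l:ℤ)) l)]
    refine Finset.sum_congr rfl fun Δi _ => ?_
    rw [← Finset.sum_coe_sort (Finset.Icc (-(l:ℤ)) l)]
    refine Finset.sum_congr rfl fun Δj _ => ?_
    refine Finset.sum_congr rfl fun k _ => ?_
    rw [hX' (i, j) (Δi, Δj, k), hY' (Δi, Δj, k) k']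
  intro i j k'
  subst hZ'₀ hαZ'₀
  constructor
  · simp [key i j k']
  · simp [Matrix.smul_apply, key i j k', mul_comm]
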